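/- (Bound on the orthogonal component of the second derivative.) Let d ≥ 1, λ > 0. Let H : ℝ → Matrix (Fin d) (Fin d) ℂ be twice differentiable on [0,1] with each H(s) Hermitian, and let Ψ : ℝ → EuclideanSpace ℂ (Fin d) be twice differentiable on [0,1] with ‖Ψ(s)‖ = 1, H(s) Ψ(s) = 0, and ⟨Ψ'(s), Ψ(s)⟩ = 0 for all s ∈ [0,1]. Assume that for every s ∈ [0,1] the kernel of H(s) is spanned by Ψ(s) and every nonzero eigenvalue μ of H(s) satisfies |μ| ≥ λ. Then for every s ∈ [0,1], the component of Ψ''(s) orthogonal to Ψ(s) satisfies ‖Ψ''(s) − ⟨Ψ(s), Ψ''(s)⟩ Ψ(s)‖ ≤ ‖H''(s)‖/λ + 2·‖H'(s)‖²/λ². -/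

import Mathlib

open scoped InnerProductSpace

/-- The continuous linear map on Euclidean space associated to a matrix;
its operator norm is the operator norm induced by the Euclidean norm. -/
noncomputable def opCLM {d : ℕ} (A : Matrix (Fin d) (Fin d) ℂ) :
    EuclideanSpace ℂ (Fin d) →L[ℂ] EuclideanSpace ℂ (Fin d) :=
  Matrix.toEuclideanCLM (𝕜 := ℂ) A

lemma opCLM_eigen {d : ℕ} {A : Matrix (Fin d) (Fin d) ℂ} (hA : A.IsHermitian) (j : Fin d) :
    opCLM A (hA.eigenvectorBasis j) = (hA.eigenvalues j : ℂ) • hA.eigenvectorBasis j := by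
  have h1 : opCLM A (hA.eigenvectorBasis j)
      = (WithLp.equiv 2 (Fin d → ℂ)).symm (A.mulVec ⇑(hA.eigenvectorBasis j)) := rfl
  rw [h1, hA.mulVec_eigenvectorBasis,
    RCLike.real_smul_eq_coe_smul (K := ℂ)]
  rfl

lemma opCLM_symm {d : ℕ} {A : Matrix (Fin d) (Fin d) ℂ} (hA : A.IsHermitian)
    (x y : EuclideanSpace ℂ (Fin d)) : ⟪opCLM A x, y⟫_ℂ = ⟪x, opCLM A y⟫_ℂ := by
  have hs := Matrix.isHermitian_iff_isSymmetric.mp hA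
  have hx : opCLM A x = Matrix.toEuclideanLin A x := by
    rw [opCLM, ← Matrix.coe_toEuclideanCLM_eq_toEuclideanLin]; rfl
  have hy : opCLM A y = Matrix.toEuclideanLin A y := by
    rw [opCLM, ← Matrix.coe_toEuclideanCLM_eq_toEuclideanLin]; rfl
  rw [hx, hy]; exact hs x y

lemma parseval {d : ℕ} (b : OrthonormalBasis (Fin d) ℂ (EuclideanSpace ℂ (Fin d)))
    (x : EuclideanSpace ℂ (Fin d)) : ‖x‖ ^ 2 = ∑ j, ‖⟪b j, x⟫_ℂ‖ ^ 2 := by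
  have key : ((‖x‖ ^ 2 : ℝ) : ℂ) = ((∑ j, ‖⟪b j, x⟫_ℂ‖ ^ 2 : ℝ) : ℂ) := by
    push_cast
    calc (‖x‖ ^ 2 : ℂ) = ⟪x, x⟫_ℂ := (inner_self_eq_norm_sq_to_K x).symm
      _ = ∑ j, (starRingEnd ℂ) (⟪b j, x⟫_ℂ) * ⟪b j, x⟫_ℂ := by
          conv_lhs => rw [← b.sum_repr' x]
          exact b.orthonormal.inner_sum _ _ _
      _ = ∑ j, ((‖⟪b j, x⟫_ℂ‖ : ℂ)) ^ 2 := by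
          refine Finset.sum_congr rfl fun j _ => ?_
          rw [RCLike.conj_mul]; norm_cast
  exact_mod_cast key

lemma coercive {d : ℕ} {A : Matrix (Fin d) (Fin d) ℂ} (hA : A.IsHermitian)
    {lam : ℝ} (hlam : 0 < lam) {Ψ : EuclideanSpace ℂ (Fin d)} (hΨn : ‖Ψ‖ = 1)
    (hker0 : opCLM A Ψ = 0)
    (hker : ∀ v : EuclideanSpace ℂ (Fin d), opCLM A v = 0 → ∃ c : ℂ, v = c • Ψ)
    (hgap : ∀ (μ : ℂ) (v : EuclideanSpace ℂ (Fin d)), v ≠ 0 →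
      opCLM A v = μ • v → μ ≠ 0 → lam ≤ ‖μ‖)
    (v : EuclideanSpace ℂ (Fin d)) :
    lam * ‖v - ⟪Ψ, v⟫_ℂ • Ψ‖ ≤ ‖opCLM A v‖ := by
  set b := hA.eigenvectorBasis with hb
  set μ := hA.eigenvalues with hμ
  have hbnorm : ∀ j, ‖b j‖ = 1 := fun j => b.orthonormal.1 j
  have hbne : ∀ j, b j ≠ 0 := fun j h => by
    have := hbnorm j; rw [h, norm_zero] at this; norm_num at this
  have hcoef : ∀ (x : EuclideanSpace ℂ (Fin d)) (j : Fin d),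
      ⟪b j, opCLM A x⟫_ℂ = (μ j : ℂ) * ⟪b j, x⟫_ℂ := by
    intro x j
    rw [← opCLM_symm hA, opCLM_eigen hA j, inner_smul_left]
    simp [Complex.conj_ofReal]
    rfl
  have hΨne : Ψ ≠ 0 := fun h => by rw [h, norm_zero] at hΨn; norm_num at hΨn
  have hex : ∃ j, μ j = 0 := by
    by_contra h
    push_neg at h
    have hall : ∀ j, ⟪b j, Ψ⟫_ℂ = 0 := by
      intro j
      have h0 : (μ j : ℂ) * ⟪b j, Ψ⟫_ℂ = 0 := by rw [← hcoef, hker0, inner_zero_right]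
      rcases mul_eq_zero.mp h0 with h1 | h1
      · exact absurd (by exact_mod_cast h1) (h j)
      · exact h1
    apply hΨne
    rw [← b.sum_repr' Ψ]
    simp [hall]
  obtain ⟨j₀, hj₀⟩ := hex
  have heig0 : opCLM A (b j₀) = 0 := by
    rw [show opCLM A (b j₀) = (μ j₀ : ℂ) • b j₀ from opCLM_eigen hA j₀, hj₀]; simp
  obtain ⟨c, hc⟩ := hker (b j₀) heig0
  have hcn : ‖c‖ = 1 := by
    have h := hbnorm j₀
    rw [hc, norm_smul, hΨn, mul_one] at h
    exact h
  have hcc : (starRingEnd ℂ) c * c = 1 := by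
    rw [RCLike.conj_mul, hcn]; norm_num
  have hproj : ⟪Ψ, v⟫_ℂ • Ψ = ⟪b j₀, v⟫_ℂ • b j₀ := by
    rw [hc, inner_smul_left, smul_smul]
    congr 1
    linear_combination -⟪Ψ, v⟫_ℂ * hcc
  have huniq : ∀ j, j ≠ j₀ → μ j ≠ 0 := by
    intro j hne h0
    have heigj : opCLM A (b j) = 0 := by
      rw [show opCLM A (b j) = (μ j : ℂ) • b j from opCLM_eigen hA j, h0]; simp
    obtain ⟨c', hc'⟩ := hker (b j) heigj
    have horth : ⟪b j, b j₀⟫_ℂ = 0 := b.orthonormal.2 hne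
    have hΨΨ : ⟪Ψ, Ψ⟫_ℂ = 1 := by
      rw [inner_self_eq_norm_sq_to_K, hΨn]; norm_num
    rw [hc, hc', inner_smul_left, inner_smul_right, hΨΨ, mul_one] at horth
    rcases mul_eq_zero.mp horth with h | h
    · have hcz : c' = 0 := by simpa using congrArg (starRingEnd ℂ) h
      exact hbne j (by rw [hc', hcz, zero_smul])
    · exact hbne j₀ (by rw [hc, h, zero_smul])
  have hgapj : ∀ j, j ≠ j₀ → lam ≤ |μ j| := by
    intro j hne
    have h := hgap (μ j : ℂ) (b j) (hbne j) (opCLM_eigen hA j)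
      (by exact_mod_cast huniq j hne)
    simpa using h
  set w := v - ⟪Ψ, v⟫_ℂ • Ψ with hw
  have hwcoef : ∀ j, ⟪b j, w⟫_ℂ = if j = j₀ then 0 else ⟪b j, v⟫_ℂ := by
    intro j
    have hij : ⟪b j, b j₀⟫_ℂ = if j = j₀ then 1 else 0 :=
      orthonormal_iff_ite.mp b.orthonormal j j₀
    rw [hw, hproj, inner_sub_right, inner_smul_right, hij]
    by_cases hje : j = j₀
    · subst hje; simp
    · simp [hje]
  have hsq : lam ^ 2 * ‖w‖ ^ 2 ≤ ‖opCLM A v‖ ^ 2 := by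
    rw [parseval b w, parseval b (opCLM A v), Finset.mul_sum]
    apply Finset.sum_le_sum
    intro j _
    rw [hcoef v j, hwcoef j]
    by_cases hje : j = j₀
    · simp [hje]
      positivity
    · rw [if_neg hje, norm_mul]
      have h1 : ‖(μ j : ℂ)‖ = |μ j| := by
        rw [Complex.norm_real, Real.norm_eq_abs]
      rw [h1, mul_pow]
      have h2 := hgapj j hje
      have h3 : lam ^ 2 ≤ |μ j| ^ 2 := pow_le_pow_left₀ hlam.le h2 2
      have h4 : (0:ℝ) ≤ ‖⟪b j, v⟫_ℂ‖ ^ 2 := by positivity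
      exact mul_le_mul_of_nonneg_right h3 h4
  have h1 : (lam * ‖w‖) ^ 2 ≤ ‖opCLM A v‖ ^ 2 := by rw [mul_pow]; exact hsq
  calc lam * ‖w‖ = Real.sqrt ((lam * ‖w‖) ^ 2) :=
        (Real.sqrt_sq (by positivity)).symm
    _ ≤ Real.sqrt (‖opCLM A v‖ ^ 2) := Real.sqrt_le_sqrt h1
    _ = ‖opCLM A v‖ := Real.sqrt_sq (norm_nonneg _)

/-- **Bound on the orthogonal component of the second derivative.** -/
theorem second_deriv_orthogonal_component_bound {d : ℕ} (hd : 1 ≤ d)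
    (lam : ℝ) (hlam : 0 < lam)
    (H H' H'' : ℝ → Matrix (Fin d) (Fin d) ℂ)
    (hHd1 : ∀ s ∈ Set.Icc (0:ℝ) 1, HasDerivAt (fun t => opCLM (H t)) (opCLM (H' s)) s)
    (hHd2 : ∀ s ∈ Set.Icc (0:ℝ) 1, HasDerivAt (fun t => opCLM (H' t)) (opCLM (H'' s)) s)
    (hherm : ∀ s ∈ Set.Icc (0:ℝ) 1, (H s).IsHermitian)
    (Ψ Ψ' Ψ'' : ℝ → EuclideanSpace ℂ (Fin d))
    (hΨd1 : ∀ s ∈ Set.Icc (0:ℝ) 1, HasDerivAt Ψ (Ψ' s) s)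
    (hΨd2 : ∀ s ∈ Set.Icc (0:ℝ) 1, HasDerivAt Ψ' (Ψ'' s) s)
    (hΨnorm : ∀ s ∈ Set.Icc (0:ℝ) 1, ‖Ψ s‖ = 1)
    (heig : ∀ s ∈ Set.Icc (0:ℝ) 1, opCLM (H s) (Ψ s) = 0)
    (hphase : ∀ s ∈ Set.Icc (0:ℝ) 1, ⟪Ψ' s, Ψ s⟫_ℂ = 0)
    (hker : ∀ s ∈ Set.Icc (0:ℝ) 1, ∀ v : EuclideanSpace ℂ (Fin d),
      opCLM (H s) v = 0 → ∃ c : ℂ, v = c • Ψ s)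
    (hgap : ∀ s ∈ Set.Icc (0:ℝ) 1, ∀ (μ : ℂ) (v : EuclideanSpace ℂ (Fin d)), v ≠ 0 →
      opCLM (H s) v = μ • v → μ ≠ 0 → lam ≤ ‖μ‖) :
    ∀ s ∈ Set.Icc (0:ℝ) 1,
      ‖Ψ'' s - ⟪Ψ s, Ψ'' s⟫_ℂ • Ψ s‖ ≤
        ‖opCLM (H'' s)‖ / lam + 2 * ‖opCLM (H' s)‖ ^ 2 / lam ^ 2 := by
  let R : (EuclideanSpace ℂ (Fin d) →L[ℂ] EuclideanSpace ℂ (Fin d)) →L[ℝ]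
      (EuclideanSpace ℂ (Fin d) →L[ℝ] EuclideanSpace ℂ (Fin d)) :=
    (ContinuousLinearMap.restrictScalarsIsometry ℂ _ _ ℝ ℝ).toContinuousLinearMap
  have hRd1 : ∀ t ∈ Set.Icc (0:ℝ) 1,
      HasDerivAt (fun r => R (opCLM (H r))) (R (opCLM (H' t))) t :=
    fun t ht => R.hasFDerivAt.comp_hasDerivAt t (hHd1 t ht)
  have hRd2 : ∀ t ∈ Set.Icc (0:ℝ) 1,
      HasDerivAt (fun r => R (opCLM (H' r))) (R (opCLM (H'' t))) t :=
    fun t ht => R.hasFDerivAt.comp_hasDerivAt t (hHd2 t ht)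
  have heq1 : ∀ t ∈ Set.Icc (0:ℝ) 1,
      opCLM (H' t) (Ψ t) + opCLM (H t) (Ψ' t) = 0 := by
    intro t ht
    have hda : HasDerivAt (fun r => opCLM (H r) (Ψ r))
        (opCLM (H' t) (Ψ t) + opCLM (H t) (Ψ' t)) t :=
      (hRd1 t ht).clm_apply (hΨd1 t ht)
    have h1 := hda.hasDerivWithinAt (s := Set.Icc (0:ℝ) 1)
    have h2 : HasDerivWithinAt (fun r => opCLM (H r) (Ψ r)) 0 (Set.Icc (0:ℝ) 1) t :=
      (hasDerivWithinAt_const t _ (0 : EuclideanSpace ℂ (Fin d))).congr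
        (fun y hy => heig y hy) (heig t ht)
    have hudt := (uniqueDiffOn_Icc one_pos) t ht
    calc opCLM (H' t) (Ψ t) + opCLM (H t) (Ψ' t)
        = derivWithin (fun r => opCLM (H r) (Ψ r)) (Set.Icc (0:ℝ) 1) t :=
          (h1.derivWithin hudt).symm
      _ = 0 := h2.derivWithin hudt
  intro s hs
  have heq2 : (opCLM (H'' s) (Ψ s) + opCLM (H' s) (Ψ' s))
      + (opCLM (H' s) (Ψ' s) + opCLM (H s) (Ψ'' s)) = 0 := by
    have hda2 : HasDerivAt (fun r => opCLM (H' r) (Ψ r) + opCLM (H r) (Ψ' r))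
        ((opCLM (H'' s) (Ψ s) + opCLM (H' s) (Ψ' s))
          + (opCLM (H' s) (Ψ' s) + opCLM (H s) (Ψ'' s))) s :=
      ((hRd2 s hs).clm_apply (hΨd1 s hs)).add ((hRd1 s hs).clm_apply (hΨd2 s hs))
    have h1 := hda2.hasDerivWithinAt (s := Set.Icc (0:ℝ) 1)
    have h2 : HasDerivWithinAt (fun r => opCLM (H' r) (Ψ r) + opCLM (H r) (Ψ' r)) 0
        (Set.Icc (0:ℝ) 1) s :=
      (hasDerivWithinAt_const s _ (0 : EuclideanSpace ℂ (Fin d))).congr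
        (fun y hy => heq1 y hy) (heq1 s hs)
    have hudt := (uniqueDiffOn_Icc one_pos) s hs
    calc (opCLM (H'' s) (Ψ s) + opCLM (H' s) (Ψ' s))
        + (opCLM (H' s) (Ψ' s) + opCLM (H s) (Ψ'' s))
        = derivWithin (fun r => opCLM (H' r) (Ψ r) + opCLM (H r) (Ψ' r))
            (Set.Icc (0:ℝ) 1) s := (h1.derivWithin hudt).symm
      _ = 0 := h2.derivWithin hudt
  -- identity for H Ψ'
  have hid1 : opCLM (H s) (Ψ' s) = -(opCLM (H' s) (Ψ s)) :=
    eq_neg_of_add_eq_zero_right (heq1 s hs)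
  -- identity for H Ψ''
  have hid2 : opCLM (H s) (Ψ'' s)
      = -(opCLM (H'' s) (Ψ s) + opCLM (H' s) (Ψ' s)) - opCLM (H' s) (Ψ' s) := by
    have h1 : opCLM (H' s) (Ψ' s) + opCLM (H s) (Ψ'' s)
        = -(opCLM (H'' s) (Ψ s) + opCLM (H' s) (Ψ' s)) :=
      eq_neg_of_add_eq_zero_right heq2
    rw [← h1]; abel
  have hphase' : ⟪Ψ s, Ψ' s⟫_ℂ = 0 := by
    rw [← inner_conj_symm, hphase s hs, map_zero]
  -- bound on ‖Ψ'‖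
  have hΨ'bound : lam * ‖Ψ' s‖ ≤ ‖opCLM (H' s)‖ := by
    have h := coercive (hherm s hs) hlam (hΨnorm s hs) (heig s hs) (hker s hs)
      (hgap s hs) (Ψ' s)
    rw [hphase', zero_smul, sub_zero] at h
    calc lam * ‖Ψ' s‖ ≤ ‖opCLM (H s) (Ψ' s)‖ := h
      _ = ‖opCLM (H' s) (Ψ s)‖ := by rw [hid1, norm_neg]
      _ ≤ ‖opCLM (H' s)‖ * ‖Ψ s‖ := (opCLM (H' s)).le_opNorm _
      _ = ‖opCLM (H' s)‖ := by rw [hΨnorm s hs, mul_one]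
  -- bound on orthogonal component of Ψ''
  have hmain : lam * ‖Ψ'' s - ⟪Ψ s, Ψ'' s⟫_ℂ • Ψ s‖
      ≤ ‖opCLM (H'' s)‖ + 2 * (‖opCLM (H' s)‖ * ‖Ψ' s‖) := by
    have h := coercive (hherm s hs) hlam (hΨnorm s hs) (heig s hs) (hker s hs)
      (hgap s hs) (Ψ'' s)
    refine h.trans ?_
    rw [hid2]
    calc ‖-(opCLM (H'' s) (Ψ s) + opCLM (H' s) (Ψ' s)) - opCLM (H' s) (Ψ' s)‖
        ≤ ‖-(opCLM (H'' s) (Ψ s) + opCLM (H' s) (Ψ' s))‖ + ‖opCLM (H' s) (Ψ' s)‖ :=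
          norm_sub_le _ _
      _ ≤ (‖opCLM (H'' s) (Ψ s)‖ + ‖opCLM (H' s) (Ψ' s)‖) + ‖opCLM (H' s) (Ψ' s)‖ := by
          rw [norm_neg]
          exact add_le_add_left (norm_add_le _ _) _
      _ ≤ (‖opCLM (H'' s)‖ * ‖Ψ s‖ + ‖opCLM (H' s)‖ * ‖Ψ' s‖)
            + ‖opCLM (H' s)‖ * ‖Ψ' s‖ := by
          gcongr <;> exact ContinuousLinearMap.le_opNorm _ _
      _ = ‖opCLM (H'' s)‖ + 2 * (‖opCLM (H' s)‖ * ‖Ψ' s‖) := by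
          rw [hΨnorm s hs, mul_one]; ring
  -- final arithmetic
  set X := ‖Ψ'' s - ⟪Ψ s, Ψ'' s⟫_ℂ • Ψ s‖ with hX
  set a := ‖opCLM (H'' s)‖ with ha
  set bb := ‖opCLM (H' s)‖ with hbb
  have hbb0 : 0 ≤ bb := norm_nonneg _
  have hgoal : X * lam ^ 2 ≤ a * lam + 2 * bb ^ 2 := by
    nlinarith [mul_le_mul_of_nonneg_left hmain hlam.le,
      mul_le_mul_of_nonneg_left hΨ'bound hbb0]
  have h2 : X ≤ (a * lam + 2 * bb ^ 2) / lam ^ 2 :=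
    (le_div_iff₀ (by positivity)).mpr hgoal
  refine h2.trans_eq ?_
  field_simp
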